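/- Fix λ ∈ (0,1). Let X be a real random variable with absolutely continuous distribution function F and law μ_X, and Y a real random variable with absolutely continuous distribution function G and law μ_Y. Put H := λF + (1−λ)G, the distribution function of the mixture λμ_X + (1−λ)μ_Y. Let X_1, X_2 be i.i.d. copies of X and Y_1, Y_2 be i.i.d. copies of Y, all four mutually independent. Then 2·E|H(X_1) − H(Y_1)| − E|H(X_1) − H(X_2)| − E|H(Y_1) − H(Y_2)| = 2 ∫_ℝ (F(t) − G(t))² d(λμ_X + (1−λ)μ_Y)(t); i.e., one half of the population rank energy RE_λ²(X,Y) equals the population two-sample Cramér–von Mises functional ∫ (F − G)² dH. -/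

import Mathlib

open MeasureTheory ProbabilityTheory Filter Topology
open scoped ENNReal NNReal

noncomputable section

namespace Stmt14Aux

/-- The pointwise layer-cake identity: `|ν(Iic x) - ν(Iic y)| = ∫ |1_{t≤x} - 1_{t≤y}| dν`. -/
lemma abs_cdf_sub (ν : Measure ℝ) [IsFiniteMeasure ν] (x y : ℝ) :
    |(ν (Set.Iic x)).toReal - (ν (Set.Iic y)).toReal|
      = ∫ t, |(if t ≤ x then (1:ℝ) else 0) - (if t ≤ y then (1:ℝ) else 0)| ∂ν := by
  wlog hxy : y ≤ x with Hwlog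
  · have h := Hwlog ν y x (le_of_not_ge hxy)
    rw [abs_sub_comm] at h
    rw [h]
    refine integral_congr_ae (Filter.Eventually.of_forall fun t => ?_)
    dsimp only
    rw [abs_sub_comm]
  · have hsub : Set.Iic y ⊆ Set.Iic x := Set.Iic_subset_Iic.mpr hxy
    have hmono : (ν (Set.Iic y)).toReal ≤ (ν (Set.Iic x)).toReal :=
      ENNReal.toReal_mono (measure_ne_top _ _) (measure_mono hsub)
    rw [abs_of_nonneg (sub_nonneg.mpr hmono)]
    have hpt : ∀ t, |(if t ≤ x then (1:ℝ) else 0) - (if t ≤ y then (1:ℝ) else 0)|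
        = (Set.Ioc y x).indicator (1 : ℝ → ℝ) t := by
      intro t
      by_cases h1 : t ≤ x <;> by_cases h2 : t ≤ y
      · simp [Set.indicator_apply, Set.mem_Ioc, h1, h2, not_lt.mpr h2]
      · simp [Set.indicator_apply, Set.mem_Ioc, h1, h2, lt_of_not_ge h2]
      · exact absurd (h2.trans hxy) h1
      · have : ¬ y < t ∨ ¬ t ≤ x := Or.inr h1
        simp [Set.indicator_apply, Set.mem_Ioc, h1, h2]
    calc (ν (Set.Iic x)).toReal - (ν (Set.Iic y)).toReal
        = (ν (Set.Ioc y x)).toReal := by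
          rw [← Set.Iic_sdiff_Iic, measure_diff hsub measurableSet_Iic.nullMeasurableSet
            (measure_ne_top _ _), ENNReal.toReal_sub_of_le (measure_mono hsub) (measure_ne_top _ _)]
      _ = ∫ t, (Set.Ioc y x).indicator (1 : ℝ → ℝ) t ∂ν :=
          (integral_indicator_one measurableSet_Ioc).symm
      _ = _ := by
          refine integral_congr_ae (Filter.Eventually.of_forall fun t => ?_)
          dsimp only
          exact (hpt t).symm

/-- Inner integral over a product of probability measures. -/
lemma inner_integral (μ μ' : Measure ℝ) [IsProbabilityMeasure μ] [IsProbabilityMeasure μ'] (t : ℝ) :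
    ∫ p : ℝ × ℝ, |(if t ≤ p.1 then (1:ℝ) else 0) - (if t ≤ p.2 then (1:ℝ) else 0)| ∂ μ.prod μ'
      = (μ (Set.Ici t)).toReal + (μ' (Set.Ici t)).toReal
        - 2 * ((μ (Set.Ici t)).toReal * (μ' (Set.Ici t)).toReal) := by
  set f : ℝ → ℝ := fun x => (Set.Ici t).indicator (1 : ℝ → ℝ) x with hf
  have hfval : ∀ x, f x = if t ≤ x then (1:ℝ) else 0 := by
    intro x; simp [hf, Set.indicator_apply, Set.mem_Ici]
  have hfint : ∀ (κ : Measure ℝ) [IsProbabilityMeasure κ], Integrable f κ := by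
    intro κ _
    exact (integrable_const (1:ℝ)).indicator measurableSet_Ici
  have hpt : ∀ p : ℝ × ℝ,
      |(if t ≤ p.1 then (1:ℝ) else 0) - (if t ≤ p.2 then (1:ℝ) else 0)|
        = f p.1 * 1 + 1 * f p.2 - 2 * (f p.1 * f p.2) := by
    intro p
    rw [hfval, hfval]
    by_cases h1 : t ≤ p.1 <;> by_cases h2 : t ≤ p.2 <;> simp [h1, h2] <;> norm_num
  have h1 : Integrable (fun p : ℝ × ℝ => f p.1 * 1) (μ.prod μ') :=
    (hfint μ).mul_prod (integrable_const 1)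
  have h2 : Integrable (fun p : ℝ × ℝ => 1 * f p.2) (μ.prod μ') :=
    (integrable_const 1).mul_prod (hfint μ')
  have h3 : Integrable (fun p : ℝ × ℝ => f p.1 * f p.2) (μ.prod μ') :=
    (hfint μ).mul_prod (hfint μ')
  calc ∫ p : ℝ × ℝ, |(if t ≤ p.1 then (1:ℝ) else 0) - (if t ≤ p.2 then (1:ℝ) else 0)| ∂ μ.prod μ'
      = ∫ p : ℝ × ℝ, (f p.1 * 1 + 1 * f p.2 - 2 * (f p.1 * f p.2)) ∂ μ.prod μ' :=
        integral_congr_ae (Filter.Eventually.of_forall fun p => hpt p)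
    _ = (∫ p : ℝ × ℝ, f p.1 * 1 ∂ μ.prod μ') + (∫ p : ℝ × ℝ, 1 * f p.2 ∂ μ.prod μ')
          - 2 * ∫ p : ℝ × ℝ, f p.1 * f p.2 ∂ μ.prod μ' := by
        have h12 : Integrable (fun p : ℝ × ℝ => f p.1 * 1 + 1 * f p.2) (μ.prod μ') := h1.add h2
        have h3' : Integrable (fun p : ℝ × ℝ => 2 * (f p.1 * f p.2)) (μ.prod μ') :=
          h3.const_mul 2
        rw [integral_sub h12 h3', integral_add h1 h2]
        simp only [integral_const_mul]
    _ = _ := by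
        rw [integral_prod_mul f (fun _ => (1:ℝ)), integral_prod_mul (fun _ => (1:ℝ)) f,
          integral_prod_mul f f, integral_indicator_one measurableSet_Ici,
          integral_indicator_one measurableSet_Ici, integral_const]
        simp
        rfl

end Stmt14Aux

namespace Stmt14Aux

lemma meas_cdfI (κ : Measure ℝ) [IsFiniteMeasure κ] :
    Measurable (fun t => (κ (Set.Ici t)).toReal) := by
  have h : Antitone (fun t => (κ (Set.Ici t)).toReal) := fun s t hst =>
    ENNReal.toReal_mono (measure_ne_top _ _) (measure_mono (Set.Ici_subset_Ici.mpr hst))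
  exact h.measurable

lemma cdfI_le_one (κ : Measure ℝ) [IsProbabilityMeasure κ] (t : ℝ) :
    (κ (Set.Ici t)).toReal ≤ 1 := by
  calc (κ (Set.Ici t)).toReal ≤ (κ Set.univ).toReal :=
        ENNReal.toReal_mono (measure_ne_top _ _) (measure_mono (Set.subset_univ _))
    _ = 1 := by simp

lemma integrable_cdfI (κ ν : Measure ℝ) [IsProbabilityMeasure κ] [IsFiniteMeasure ν] :
    Integrable (fun t => (κ (Set.Ici t)).toReal) ν := by
  refine (integrable_const (1:ℝ)).mono' (meas_cdfI κ).aestronglyMeasurable ?_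
  refine Filter.Eventually.of_forall fun t => ?_
  rw [Real.norm_eq_abs, abs_of_nonneg ENNReal.toReal_nonneg]
  exact cdfI_le_one κ t

lemma integrable_cdfI_mul (κ κ' ν : Measure ℝ) [IsProbabilityMeasure κ]
    [IsProbabilityMeasure κ'] [IsFiniteMeasure ν] :
    Integrable (fun t => (κ (Set.Ici t)).toReal * (κ' (Set.Ici t)).toReal) ν := by
  refine (integrable_const (1:ℝ)).mono'
    ((meas_cdfI κ).mul (meas_cdfI κ')).aestronglyMeasurable ?_
  refine Filter.Eventually.of_forall fun t => ?_
  rw [Real.norm_eq_abs, abs_of_nonneg (mul_nonneg ENNReal.toReal_nonneg ENNReal.toReal_nonneg)]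
  exact mul_le_one₀ (cdfI_le_one κ t) ENNReal.toReal_nonneg (cdfI_le_one κ' t)

lemma pair_integral (μ μ' ν : Measure ℝ) [IsProbabilityMeasure μ] [IsProbabilityMeasure μ']
    [IsProbabilityMeasure ν] (H : ℝ → ℝ) (hHν : ∀ x, H x = (ν (Set.Iic x)).toReal) :
    ∫ p : ℝ × ℝ, |H p.1 - H p.2| ∂ μ.prod μ'
      = ∫ t, ((μ (Set.Ici t)).toReal + (μ' (Set.Ici t)).toReal
          - 2 * ((μ (Set.Ici t)).toReal * (μ' (Set.Ici t)).toReal)) ∂ν := by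
  have step1 : ∫ p : ℝ × ℝ, |H p.1 - H p.2| ∂ μ.prod μ'
      = ∫ p : ℝ × ℝ, ∫ t, |(if t ≤ p.1 then (1:ℝ) else 0) - (if t ≤ p.2 then (1:ℝ) else 0)| ∂ν
          ∂ μ.prod μ' := by
    refine integral_congr_ae (Filter.Eventually.of_forall fun p => ?_)
    dsimp only
    rw [hHν, hHν]
    exact abs_cdf_sub ν p.1 p.2
  have hker : Integrable (Function.uncurry fun (p : ℝ × ℝ) (t : ℝ) =>
      |(if t ≤ p.1 then (1:ℝ) else 0) - (if t ≤ p.2 then (1:ℝ) else 0)|) ((μ.prod μ').prod ν) := by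
    have hmeas : Measurable (fun q : (ℝ × ℝ) × ℝ =>
        |(if q.2 ≤ q.1.1 then (1:ℝ) else 0) - (if q.2 ≤ q.1.2 then (1:ℝ) else 0)|) := by
      apply Measurable.abs
      exact (Measurable.ite (measurableSet_le measurable_snd measurable_fst.fst)
          measurable_const measurable_const).sub
        (Measurable.ite (measurableSet_le measurable_snd measurable_fst.snd)
          measurable_const measurable_const)
    refine (integrable_const (1:ℝ)).mono' hmeas.aestronglyMeasurable ?_
    refine Filter.Eventually.of_forall fun q => ?_
    simp only [Function.uncurry]
    rw [Real.norm_eq_abs, abs_abs]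
    by_cases h1 : q.2 ≤ q.1.1 <;> by_cases h2 : q.2 ≤ q.1.2 <;> simp [h1, h2]
  rw [step1, integral_integral_swap hker]
  refine integral_congr_ae (Filter.Eventually.of_forall fun t => ?_)
  exact inner_integral μ μ' t

end Stmt14Aux

theorem stmt14
    (lam : ℝ) (hlam : lam ∈ Set.Ioo (0 : ℝ) 1)
    (μX μY : Measure ℝ) [IsProbabilityMeasure μX] [IsProbabilityMeasure μY]
    (hacX : μX ≪ volume) (hacY : μY ≪ volume)
    (F G H : ℝ → ℝ)
    (hF : ∀ t, F t = (μX (Set.Iic t)).toReal)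
    (hG : ∀ t, G t = (μY (Set.Iic t)).toReal)
    (hH : ∀ t, H t = lam * F t + (1 - lam) * G t) :
    2 * (∫ p : ℝ × ℝ, |H p.1 - H p.2| ∂ μX.prod μY)
      - (∫ p : ℝ × ℝ, |H p.1 - H p.2| ∂ μX.prod μX)
      - (∫ p : ℝ × ℝ, |H p.1 - H p.2| ∂ μY.prod μY)
    = 2 * ∫ t, (F t - G t) ^ 2
        ∂ (ENNReal.ofReal lam • μX + ENNReal.ofReal (1 - lam) • μY) := by
  obtain ⟨hl0, hl1⟩ := hlam
  have hl1' : (0:ℝ) ≤ 1 - lam := by linarith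
  set ν : Measure ℝ := ENNReal.ofReal lam • μX + ENNReal.ofReal (1 - lam) • μY with hν
  haveI : IsProbabilityMeasure ν := by
    constructor
    simp only [hν, Measure.add_apply, Measure.smul_apply, smul_eq_mul, measure_univ, mul_one]
    rw [← ENNReal.ofReal_add hl0.le hl1']
    norm_num
  have hHν : ∀ x, H x = (ν (Set.Iic x)).toReal := by
    intro x
    rw [hH, hF, hG]
    simp only [hν, Measure.add_apply, Measure.smul_apply, smul_eq_mul]
    rw [ENNReal.toReal_add (ENNReal.mul_ne_top ENNReal.ofReal_ne_top (measure_ne_top _ _))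
        (ENNReal.mul_ne_top ENNReal.ofReal_ne_top (measure_ne_top _ _)),
      ENNReal.toReal_mul, ENNReal.toReal_mul,
      ENNReal.toReal_ofReal hl0.le, ENNReal.toReal_ofReal hl1']
  have key : ∀ (κ : Measure ℝ) [IsProbabilityMeasure κ], κ ≪ volume →
      ∀ t, (κ (Set.Ici t)).toReal = 1 - (κ (Set.Iic t)).toReal := by
    intro κ _ hac t
    have h0 : κ {t} = 0 := hac (measure_singleton t)
    have hIic : κ (Set.Iic t) = κ (Set.Iio t) := by
      rw [← Set.Iio_union_right, measure_union (Set.disjoint_singleton_right.mpr (by simp))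
        (measurableSet_singleton t), h0, add_zero]
    have huniv : κ (Set.Iio t) + κ (Set.Ici t) = 1 := by
      rw [← measure_union (Set.Iio_disjoint_Ici (le_refl t)) measurableSet_Ici,
        Set.Iio_union_Ici, measure_univ]
    have h2 : (κ (Set.Iio t)).toReal + (κ (Set.Ici t)).toReal = 1 := by
      rw [← ENNReal.toReal_add (measure_ne_top _ _) (measure_ne_top _ _), huniv,
        ENNReal.toReal_one]
    have h3 : (κ (Set.Iic t)).toReal = (κ (Set.Iio t)).toReal := by rw [hIic]
    linarith
  have hA : ∀ t, (μX (Set.Ici t)).toReal = 1 - F t := by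
    intro t; rw [key μX hacX t, hF]
  have hB : ∀ t, (μY (Set.Ici t)).toReal = 1 - G t := by
    intro t; rw [key μY hacY t, hG]
  rw [Stmt14Aux.pair_integral μX μY ν H hHν, Stmt14Aux.pair_integral μX μX ν H hHν,
    Stmt14Aux.pair_integral μY μY ν H hHν]
  have iA := Stmt14Aux.integrable_cdfI μX ν
  have iB := Stmt14Aux.integrable_cdfI μY ν
  have iAB := Stmt14Aux.integrable_cdfI_mul μX μY ν
  have iAA := Stmt14Aux.integrable_cdfI_mul μX μX ν
  have iBB := Stmt14Aux.integrable_cdfI_mul μY μY ν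
  have iu : Integrable (fun t => (μX (Set.Ici t)).toReal + (μY (Set.Ici t)).toReal
      - 2 * ((μX (Set.Ici t)).toReal * (μY (Set.Ici t)).toReal)) ν :=
    (iA.add iB).sub (iAB.const_mul 2)
  have iv : Integrable (fun t => (μX (Set.Ici t)).toReal + (μX (Set.Ici t)).toReal
      - 2 * ((μX (Set.Ici t)).toReal * (μX (Set.Ici t)).toReal)) ν :=
    (iA.add iA).sub (iAA.const_mul 2)
  have iw : Integrable (fun t => (μY (Set.Ici t)).toReal + (μY (Set.Ici t)).toReal
      - 2 * ((μY (Set.Ici t)).toReal * (μY (Set.Ici t)).toReal)) ν :=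
    (iB.add iB).sub (iBB.const_mul 2)
  have iu2 : Integrable (fun t => 2 * ((μX (Set.Ici t)).toReal + (μY (Set.Ici t)).toReal
      - 2 * ((μX (Set.Ici t)).toReal * (μY (Set.Ici t)).toReal))) ν := iu.const_mul 2
  rw [show (2:ℝ) * ∫ t, (F t - G t) ^ 2 ∂ν = ∫ t, 2 * (F t - G t) ^ 2 ∂ν from
    (integral_const_mul 2 _).symm]
  have iuv : Integrable (fun t => 2 * ((μX (Set.Ici t)).toReal + (μY (Set.Ici t)).toReal
      - 2 * ((μX (Set.Ici t)).toReal * (μY (Set.Ici t)).toReal))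
      - ((μX (Set.Ici t)).toReal + (μX (Set.Ici t)).toReal
        - 2 * ((μX (Set.Ici t)).toReal * (μX (Set.Ici t)).toReal))) ν := iu2.sub iv
  rw [← integral_const_mul 2, ← integral_sub iu2 iv, ← integral_sub iuv iw]
  refine integral_congr_ae (Filter.Eventually.of_forall fun t => ?_)
  dsimp only
  rw [hA t, hB t]
  ring

end
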